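/- arXiv:2309.13093 — 6 statements merged into one kernel-verified Lean document; each statement's English description precedes it below -/
import Mathlib

section
/- Let α, β, γ, δ > 0 and let x, y : ℝ → ℝ be differentiable functions satisfying x'(t) = αx(t) − βx(t)y(t) and y'(t) = −δy(t) + γx(t)y(t) for all t ∈ ℝ, with x(0) > 0, y(0) > 0 and (x(0), y(0)) ≠ (δ/γ, α/β). Then the solution is periodic: there exists T > 0 such that x(t + T) = x(t) and y(t + T) = y(t) for all t ∈ ℝ. (Every trajectory starting in the open first quadrant, other than the equilibrium p₂ = (δ/γ, α/β), is a closed orbit.) -/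
open Real Set


lemma lv_pos_of_ode (x c : ℝ → ℝ) (hx : Differentiable ℝ x) (hc : Continuous c)
    (hode : ∀ t, deriv x t = c t * x t) (h0 : 0 < x 0) : ∀ t, 0 < x t := by
  set I : ℝ → ℝ := fun t => ∫ s in (0:ℝ)..t, c s with hIdef
  have hI : ∀ t, HasDerivAt I (c t) t := fun t => (hc.integral_hasStrictDerivAt 0 t).hasDerivAt
  set w : ℝ → ℝ := fun t => x t * Real.exp (-I t) with hwdef
  have hw : ∀ t, HasDerivAt w 0 t := by
    intro t
    have h1 : HasDerivAt x (deriv x t) t := (hx t).hasDerivAt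
    have h2 : HasDerivAt (fun t => Real.exp (-I t)) (Real.exp (-I t) * (-c t)) t :=
      ((hI t).neg).exp
    have := h1.mul h2
    refine this.congr_deriv ?_
    rw [hode t]; ring
  have hconst : ∀ t, w t = w 0 := by
    intro t
    exact is_const_of_deriv_eq_zero (fun s => (hw s).differentiableAt) (fun s => (hw s).deriv) t 0
  intro t
  have h := hconst t
  have hI0 : I 0 = 0 := intervalIntegral.integral_same
  have : x t * Real.exp (-I t) = x 0 := by
    simpa [hwdef, hI0] using h
  have hx' : x t = x 0 * Real.exp (I t) := by
    rw [← this, mul_assoc, ← Real.exp_add]; simp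
  rw [hx']
  positivity


lemma lv_quad (F G : ℝ → ℝ) (hF : StrictMono F) (hG : StrictMono G)
    (hF0 : F 0 = 0) (hG0 : G 0 = 0) (p q : ℝ → ℝ)
    (hp : ∀ t, HasDerivAt p (-(F (q t))) t) (hq : ∀ t, HasDerivAt q (G (p t)) t)
    (t0 : ℝ) (hp0 : 0 < p t0) (hq0 : 0 ≤ q t0) :
    ∃ t1 > t0, p t1 = 0 ∧ 0 < q t1 := by
  have hpc : Continuous p := by
    rw [continuous_iff_continuousAt]; exact fun t => (hp t).continuousAt
  have hqc : Continuous q := by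
    rw [continuous_iff_continuousAt]; exact fun t => (hq t).continuousAt
  -- the set of times ≥ t0 where p is nonpositive
  set S : Set ℝ := {t | t0 ≤ t ∧ p t ≤ 0} with hSdef
  have hSclosed : IsClosed S := by
    have : S = Ici t0 ∩ {t | p t ≤ 0} := by ext t; simp [hSdef, Ici]
    rw [this]
    exact isClosed_Ici.inter (isClosed_le hpc continuous_const)
  have hSne : S.Nonempty := by
    by_contra hemp
    rw [Set.not_nonempty_iff_eq_empty] at hemp
    have hppos : ∀ t, t0 ≤ t → 0 < p t := by
      intro t ht
      by_contra h
      exact Set.notMem_empty t (hemp ▸ (⟨ht, le_of_not_gt h⟩ : t ∈ S))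
    -- q is strictly increasing on [t0, ∞)
    have hqmono : StrictMonoOn q (Ici t0) := by
      apply strictMonoOn_of_deriv_pos (convex_Ici t0) hqc.continuousOn
      intro t ht
      rw [interior_Ici] at ht
      rw [(hq t).deriv]
      have : 0 < p t := hppos t (le_of_lt ht)
      calc (0:ℝ) = G 0 := hG0.symm
        _ < G (p t) := hG this
    set c := q (t0 + 1) with hcdef
    have hc : 0 < c := by
      have := hqmono (self_mem_Ici) (by simp : t0 + 1 ∈ Ici t0) (by linarith)
      linarith
    have hFc : 0 < F c := by
      calc (0:ℝ) = F 0 := hF0.symm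
        _ < F c := hF hc
    -- p decreases at rate at least F c after t0 + 1
    set g : ℝ → ℝ := fun t => p t + F c * t with hgdef
    have hganti : AntitoneOn g (Ici (t0 + 1)) := by
      apply antitoneOn_of_deriv_nonpos (convex_Ici _)
      · exact (hpc.add (continuous_const.mul continuous_id)).continuousOn
      · intro t _
        exact ((hp t).add ((hasDerivAt_id t).const_mul (F c))).differentiableAt.differentiableWithinAt
      · intro t ht
        rw [interior_Ici] at ht
        have hg' : HasDerivAt g (-(F (q t)) + F c * 1) t :=
          (hp t).add ((hasDerivAt_id t).const_mul (F c))
        rw [hg'.deriv]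
        have hqt : c ≤ q t := by
          rcases eq_or_lt_of_le (le_of_lt (show t0 + 1 < t from ht)) with h | h
          · rw [← h]
          · exact le_of_lt (hqmono (by simp : t0 + 1 ∈ Ici t0) (by
              simp only [mem_Ici]; linarith) h)
        have : F c ≤ F (q t) := hF.monotone hqt
        simp only [mul_one]
        linarith
    have hpt01 : 0 < p (t0 + 1) := hppos _ (by linarith)
    have hX : 0 < (p (t0 + 1) + 1) / F c := div_pos (by linarith) hFc
    have key := hganti (self_mem_Ici)
      (show t0 + 1 + (p (t0 + 1) + 1) / F c ∈ Ici (t0 + 1) by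
        simp only [mem_Ici]; linarith)
      (by linarith)
    simp only [hgdef] at key
    have hppos2 := hppos (t0 + 1 + (p (t0 + 1) + 1) / F c) (by linarith)
    have hfc' : F c * ((p (t0 + 1) + 1) / F c) = p (t0 + 1) + 1 := by
      field_simp
    nlinarith [key, hppos2, hfc']
  have hbdd : BddBelow S := ⟨t0, fun t ht => ht.1⟩
  set t1 := sInf S with ht1def
  have ht1S : t1 ∈ S := hSclosed.csInf_mem hSne hbdd
  have hlt : ∀ t, t0 ≤ t → t < t1 → 0 < p t := by
    intro t ht ht'
    by_contra h
    have : t1 ≤ t := csInf_le hbdd ⟨ht, le_of_not_gt h⟩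
    linarith
  have ht0t1 : t0 < t1 := by
    rcases eq_or_lt_of_le ht1S.1 with h | h
    · exfalso; have := ht1S.2; rw [← h] at this; linarith
    · exact h
  have hpt1_nonneg : 0 ≤ p t1 := by
    have htend : Filter.Tendsto p (nhdsWithin t1 (Iio t1)) (nhds (p t1)) :=
      (hpc.continuousAt).continuousWithinAt.tendsto
    apply ge_of_tendsto htend
    filter_upwards [Ioo_mem_nhdsLT ht0t1] with t ht
    exact le_of_lt (hlt t (le_of_lt ht.1) ht.2)
  have hpt1 : p t1 = 0 := le_antisymm ht1S.2 hpt1_nonneg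
  have hqmono2 : StrictMonoOn q (Icc t0 t1) := by
    apply strictMonoOn_of_deriv_pos (convex_Icc t0 t1) hqc.continuousOn
    intro t ht
    rw [interior_Icc] at ht
    rw [(hq t).deriv]
    have : 0 < p t := hlt t (le_of_lt ht.1) ht.2
    calc (0:ℝ) = G 0 := hG0.symm
      _ < G (p t) := hG this
  have : q t0 < q t1 := hqmono2 ⟨le_refl _, le_of_lt ht0t1⟩ ⟨le_of_lt ht0t1, le_refl _⟩ ht0t1
  exact ⟨t1, ht0t1, hpt1, by linarith⟩

lemma strictMono_negcomp {G : ℝ → ℝ} (hG : StrictMono G) :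
    StrictMono (fun s => -G (-s)) := fun a b h => by
  simp only [neg_lt_neg_iff]
  exact hG (neg_lt_neg h)

lemma lv_quad4 (F G : ℝ → ℝ) (hF : StrictMono F) (hG : StrictMono G)
    (hF0 : F 0 = 0) (hG0 : G 0 = 0) (p q : ℝ → ℝ)
    (hp : ∀ t, HasDerivAt p (-(F (q t))) t) (hq : ∀ t, HasDerivAt q (G (p t)) t)
    (t0 : ℝ) (hp0 : 0 < p t0) (hq0 : 0 ≤ q t0) :
    ∃ t4 > t0, 0 < p t4 ∧ q t4 = 0 := by
  -- Quadrant 1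
  obtain ⟨t1, ht1, hp1, hq1⟩ := lv_quad F G hF hG hF0 hG0 p q hp hq t0 hp0 hq0
  -- Quadrant 2 : rotated frame (p₁, q₁) = (q, -p)
  obtain ⟨t2, ht2, hp2, hq2⟩ := lv_quad (fun s => -G (-s)) F (strictMono_negcomp hG) hF
    (by simp [hG0]) hF0 q (fun t => -p t)
    (fun t => by convert hq t using 1; simp)
    (fun t => (hp t).neg.congr_deriv (by simp))
    t1 hq1 (by simp [hp1])
  -- Quadrant 3 : rotated frame (p₂, q₂) = (-p, -q)
  obtain ⟨t3, ht3, hp3, hq3⟩ := lv_quad (fun s => -F (-s)) (fun s => -G (-s))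
    (strictMono_negcomp hF) (strictMono_negcomp hG) (by simp [hF0]) (by simp [hG0])
    (fun t => -p t) (fun t => -q t)
    (fun t => (hp t).neg.congr_deriv (by simp))
    (fun t => (hq t).neg.congr_deriv (by simp))
    t2 (by simpa using hq2) (by simp [hp2])
  -- Quadrant 4 : rotated frame (p₃, q₃) = (-q, p)
  obtain ⟨t4, ht4, hp4, hq4⟩ := lv_quad G (fun s => -F (-s)) hG (strictMono_negcomp hF)
    hG0 (by simp [hF0]) (fun t => -q t) p
    (fun t => (hq t).neg)
    (fun t => by simpa using hp t)
    t3 (by exact hq3) (by linarith [hp3])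
  have hq4' : q t4 = 0 := by simpa using hp4
  exact ⟨t4, by linarith, hq4, hq4'⟩

lemma lv_return (F G Φ Ψ : ℝ → ℝ) (hF : StrictMono F) (hG : StrictMono G)
    (hF0 : F 0 = 0) (hG0 : G 0 = 0)
    (hΦ : ∀ s, HasDerivAt Φ (G s) s) (hΨ : ∀ s, HasDerivAt Ψ (F s) s)
    (p q : ℝ → ℝ)
    (hp : ∀ t, HasDerivAt p (-(F (q t))) t) (hq : ∀ t, HasDerivAt q (G (p t)) t)
    (t0 : ℝ) (hp0 : 0 < p t0) (hq0 : 0 ≤ q t0) :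
    ∃ a b : ℝ, a < b ∧ p a = p b ∧ q a = q b := by
  obtain ⟨a, ha, hpa, hqa⟩ := lv_quad4 F G hF hG hF0 hG0 p q hp hq t0 hp0 hq0
  obtain ⟨b, hab, hpb, hqb⟩ := lv_quad4 F G hF hG hF0 hG0 p q hp hq a hpa (le_of_eq hqa.symm)
  set E : ℝ → ℝ := fun t => Φ (p t) + Ψ (q t) with hEdef
  have hE : ∀ t, HasDerivAt E 0 t := by
    intro t
    have h1 : HasDerivAt (fun t => Φ (p t)) (G (p t) * -(F (q t))) t :=
      (hΦ (p t)).comp t (hp t)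
    have h2 : HasDerivAt (fun t => Ψ (q t)) (F (q t) * G (p t)) t :=
      (hΨ (q t)).comp t (hq t)
    have := h1.add h2
    exact this.congr_deriv (by ring)
  have hEc : E b = E a :=
    is_const_of_deriv_eq_zero (fun s => (hE s).differentiableAt) (fun s => (hE s).deriv) b a
  have hΦmono : StrictMonoOn Φ (Ici 0) := by
    apply strictMonoOn_of_deriv_pos (convex_Ici 0)
      (fun s _ => (hΦ s).continuousAt.continuousWithinAt)
    intro s hs
    rw [interior_Ici] at hs
    rw [(hΦ s).deriv]
    calc (0:ℝ) = G 0 := hG0.symm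
      _ < G s := hG hs
  have hΦeq : Φ (p a) = Φ (p b) := by
    have : Φ (p b) + Ψ (q b) = Φ (p a) + Ψ (q a) := hEc
    rw [hqa, hqb] at this
    linarith
  have hpab : p a = p b :=
    hΦmono.injOn (le_of_lt hpa) (le_of_lt hpb) hΦeq
  exact ⟨a, b, hab, hpab, by rw [hqa, hqb]⟩

lemma lv_abs_bound (s c : ℝ) (hc : 0 ≤ c) (h : Real.exp s - s - 1 ≤ c) : |s| ≤ 1 + c := by
  rcases le_or_gt s 0 with hs | hs
  · rw [abs_of_nonpos hs]; have := Real.exp_pos s; linarith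
  · rw [abs_of_pos hs]
    have h1 : 1 + s/2 ≤ Real.exp (s/2) := by have := Real.add_one_le_exp (s/2); linarith
    have h2 : Real.exp (s/2) * Real.exp (s/2) = Real.exp s := by
      rw [← Real.exp_add]; ring_nf
    nlinarith [sq_nonneg (s - 2), sq_nonneg (1 + s/2)]

lemma lv_exp_lip (R a b : ℝ) (ha : |a| ≤ R) (hb : |b| ≤ R) :
    |Real.exp a - Real.exp b| ≤ Real.exp R * |a - b| := by
  wlog h : b ≤ a generalizing a b
  · rw [abs_sub_comm, abs_sub_comm a b]; exact this b a hb ha (by linarith)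
  have hab : Real.exp b ≤ Real.exp a := Real.exp_le_exp.2 h
  rw [abs_of_nonneg (by linarith), abs_of_nonneg (by linarith)]
  have h1 : b - a + 1 ≤ Real.exp (b - a) := Real.add_one_le_exp _
  have h2 : Real.exp (b - a) * Real.exp a = Real.exp b := by
    rw [← Real.exp_add]; ring_nf
  have h3 : Real.exp a ≤ Real.exp R := Real.exp_le_exp.2 ((abs_le.1 ha).2)
  nlinarith [Real.exp_pos a, mul_le_mul_of_nonneg_right h1 (Real.exp_pos a).le,
    mul_le_mul_of_nonneg_left h3 (by linarith : (0:ℝ) ≤ a - b)]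

lemma lv_unique (V : ℝ × ℝ → ℝ × ℝ) (R : ℝ) (K : NNReal)
    (hLip : LipschitzOnWith K V (Metric.closedBall 0 R))
    (Z : ℝ → ℝ × ℝ) (hZ : ∀ t, HasDerivAt Z (V (Z t)) t)
    (hZb : ∀ t, Z t ∈ Metric.closedBall (0:ℝ×ℝ) R)
    (T a : ℝ) (hTa : Z (a + T) = Z a) : ∀ t, Z (t + T) = Z t := by
  intro t
  set Z₂ : ℝ → ℝ × ℝ := fun s => Z (s + T) with hZ₂def
  have hZ₂ : ∀ s, HasDerivAt Z₂ (V (Z₂ s)) s := by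
    intro s
    have h := (hZ (s + T)).scomp s ((hasDerivAt_id s).add_const T)
    exact h.congr_deriv (by simp [hZ₂def])
  have hEq : EqOn Z₂ Z (Icc (min t a - 1) (max t a + 1)) := by
    apply ODE_solution_unique_of_mem_Icc (v := fun _ z => V z)
      (s := fun _ => Metric.closedBall (0:ℝ×ℝ) R) (K := K) (fun _ _ => hLip)
      (t₀ := a)
      ⟨by have := min_le_right t a; linarith, by have := le_max_right t a; linarith⟩
    · exact fun s _ => (hZ₂ s).continuousAt.continuousWithinAt
    · exact fun s _ => hZ₂ s
    · exact fun s _ => hZb (s + T)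
    · exact fun s _ => (hZ s).continuousAt.continuousWithinAt
    · exact fun s _ => hZ s
    · exact fun s _ => hZb s
    · exact hTa
  exact hEq ⟨by have := min_le_left t a; linarith, by have := le_max_left t a; linarith⟩

set_option maxHeartbeats 1000000 in
/-- Every Lotka–Volterra trajectory starting in the open first quadrant, other
than the coexistence equilibrium `(δ/γ, α/β)`, is periodic (a closed orbit). -/
theorem lotka_volterra_orbits_closed
    (α β γ δ : ℝ) (hα : 0 < α) (hβ : 0 < β) (hγ : 0 < γ) (hδ : 0 < δ)
    (x y : ℝ → ℝ) (hx : Differentiable ℝ x) (hy : Differentiable ℝ y)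
    (hxode : ∀ t, deriv x t = α * x t - β * x t * y t)
    (hyode : ∀ t, deriv y t = -δ * y t + γ * x t * y t)
    (hx0 : 0 < x 0) (hy0 : 0 < y 0)
    (hne : (x 0, y 0) ≠ (δ / γ, α / β)) :
    ∃ T > (0 : ℝ), ∀ t, x (t + T) = x t ∧ y (t + T) = y t := by
  -- positivity
  have hxpos : ∀ t, 0 < x t := lv_pos_of_ode x (fun t => α - β * y t) hx
    (continuous_const.sub (continuous_const.mul hy.continuous))
    (fun t => by rw [hxode t]; ring) hx0
  have hypos : ∀ t, 0 < y t := lv_pos_of_ode y (fun t => -δ + γ * x t) hy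
    (continuous_const.add (continuous_const.mul hx.continuous))
    (fun t => by rw [hyode t]; ring) hy0
  have hxs : 0 < δ / γ := div_pos hδ hγ
  have hys : 0 < α / β := div_pos hα hβ
  -- log coordinates centred at the equilibrium
  set p : ℝ → ℝ := fun t => Real.log (x t) - Real.log (δ/γ) with hpdef
  set q : ℝ → ℝ := fun t => Real.log (y t) - Real.log (α/β) with hqdef
  set F : ℝ → ℝ := fun s => α * (Real.exp s - 1) with hFdef
  set G : ℝ → ℝ := fun s => δ * (Real.exp s - 1) with hGdef
  have hexpp : ∀ t, Real.exp (p t) = x t * (γ/δ) := by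
    intro t
    rw [hpdef]
    simp only
    rw [Real.exp_sub, Real.exp_log (hxpos t), Real.exp_log hxs]
    field_simp
  have hexpq : ∀ t, Real.exp (q t) = y t * (β/α) := by
    intro t
    rw [hqdef]
    simp only
    rw [Real.exp_sub, Real.exp_log (hypos t), Real.exp_log hys]
    field_simp
  have hF : StrictMono F := by
    intro a b h
    simp only [hFdef]
    have := Real.exp_lt_exp.2 h
    nlinarith
  have hG : StrictMono G := by
    intro a b h
    simp only [hGdef]
    have := Real.exp_lt_exp.2 h
    nlinarith
  have hF0 : F 0 = 0 := by simp [hFdef]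
  have hG0 : G 0 = 0 := by simp [hGdef]
  have hp : ∀ t, HasDerivAt p (-(F (q t))) t := by
    intro t
    have h1 : HasDerivAt (fun u => Real.log (x u)) (deriv x t / x t) t :=
      ((hx t).hasDerivAt).log (ne_of_gt (hxpos t))
    have h2 : HasDerivAt p (deriv x t / x t) t := h1.sub_const _
    convert h2 using 1
    simp only [hFdef]
    rw [hexpq t, hxode t]
    field_simp [ne_of_gt (hxpos t), ne_of_gt hα]
    ring
  have hq : ∀ t, HasDerivAt q (G (p t)) t := by
    intro t
    have h1 : HasDerivAt (fun u => Real.log (y u)) (deriv y t / y t) t :=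
      ((hy t).hasDerivAt).log (ne_of_gt (hypos t))
    have h2 : HasDerivAt q (deriv y t / y t) t := h1.sub_const _
    convert h2 using 1
    simp only [hGdef]
    rw [hexpp t, hyode t]
    field_simp [ne_of_gt (hypos t), ne_of_gt hδ]
    ring
  -- the conserved quantity
  set Φ : ℝ → ℝ := fun s => δ * (Real.exp s - s - 1) with hΦdef
  set Ψ : ℝ → ℝ := fun s => α * (Real.exp s - s - 1) with hΨdef
  have hΦ : ∀ s, HasDerivAt Φ (G s) s := by
    intro s
    have h := (((Real.hasDerivAt_exp s).sub (hasDerivAt_id s)).sub_const 1).const_mul δ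
    exact h
  have hΨ : ∀ s, HasDerivAt Ψ (F s) s := by
    intro s
    have h := (((Real.hasDerivAt_exp s).sub (hasDerivAt_id s)).sub_const 1).const_mul α
    exact h
  have hΦn : ∀ s, HasDerivAt (fun s => Φ (-s)) (-G (-s)) s := by
    intro s
    have h := (hΦ (-s)).comp s (hasDerivAt_neg s)
    exact h.congr_deriv (by ring)
  have hΨn : ∀ s, HasDerivAt (fun s => Ψ (-s)) (-F (-s)) s := by
    intro s
    have h := (hΨ (-s)).comp s (hasDerivAt_neg s)
    exact h.congr_deriv (by ring)
  -- nonequilibrium initial data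
  have hne0 : ¬(p 0 = 0 ∧ q 0 = 0) := by
    rintro ⟨h1, h2⟩
    apply hne
    simp only [hpdef, hqdef, sub_eq_zero] at h1 h2
    have hx0' : x 0 = δ/γ := by
      rw [← Real.exp_log (hxpos 0), ← Real.exp_log hxs, h1]
    have hy0' : y 0 = α/β := by
      rw [← Real.exp_log (hypos 0), ← Real.exp_log hys, h2]
    rw [hx0', hy0']
  -- existence of a closed loop in the (p, q) plane
  have hret : ∃ a b : ℝ, a < b ∧ p a = p b ∧ q a = q b := by
    rcases lt_trichotomy (p 0) 0 with hp0 | hp0 | hp0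
    · rcases le_or_gt (q 0) 0 with hq0 | hq0
      · -- frame 2 : (-p, -q)
        obtain ⟨a, b, hab, h1, h2⟩ := lv_return (fun s => -F (-s)) (fun s => -G (-s))
          (fun s => Φ (-s)) (fun s => Ψ (-s))
          (strictMono_negcomp hF) (strictMono_negcomp hG)
          (by simp [hF0]) (by simp [hG0]) hΦn hΨn
          (fun t => -p t) (fun t => -q t)
          (fun t => (hp t).neg.congr_deriv (by simp))
          (fun t => (hq t).neg.congr_deriv (by simp))
          0 (by show (0:ℝ) < -p 0; linarith) (by show (0:ℝ) ≤ -q 0; linarith)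
        exact ⟨a, b, hab, neg_inj.mp h1, neg_inj.mp h2⟩
      · -- frame 1 : (q, -p)
        obtain ⟨a, b, hab, h1, h2⟩ := lv_return (fun s => -G (-s)) F Ψ (fun s => Φ (-s))
          (strictMono_negcomp hG) hF (by simp [hG0]) hF0 hΨ hΦn
          q (fun t => -p t)
          (fun t => by convert hq t using 1; simp)
          (fun t => (hp t).neg.congr_deriv (by simp))
          0 hq0 (by show (0:ℝ) ≤ -p 0; linarith)
        exact ⟨a, b, hab, neg_inj.mp h2, h1⟩
    · rcases lt_trichotomy (q 0) 0 with hq0 | hq0 | hq0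
      · -- frame 3 : (-q, p)
        obtain ⟨a, b, hab, h1, h2⟩ := lv_return G (fun s => -F (-s)) (fun s => Ψ (-s)) Φ
          hG (strictMono_negcomp hF) hG0 (by simp [hF0]) hΨn hΦ
          (fun t => -q t) p
          (fun t => (hq t).neg)
          (fun t => by simpa using hp t)
          0 (by show (0:ℝ) < -q 0; linarith) (by show (0:ℝ) ≤ p 0; linarith)
        exact ⟨a, b, hab, h2, neg_inj.mp h1⟩
      · exact absurd ⟨hp0, hq0⟩ hne0
      · -- frame 1 : (q, -p)
        obtain ⟨a, b, hab, h1, h2⟩ := lv_return (fun s => -G (-s)) F Ψ (fun s => Φ (-s))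
          (strictMono_negcomp hG) hF (by simp [hG0]) hF0 hΨ hΦn
          q (fun t => -p t)
          (fun t => by convert hq t using 1; simp)
          (fun t => (hp t).neg.congr_deriv (by simp))
          0 hq0 (by show (0:ℝ) ≤ -p 0; linarith)
        exact ⟨a, b, hab, neg_inj.mp h2, h1⟩
    · rcases le_or_gt 0 (q 0) with hq0 | hq0
      · -- frame 0
        exact lv_return F G Φ Ψ hF hG hF0 hG0 hΦ hΨ p q hp hq 0 hp0 hq0
      · -- frame 3 : (-q, p)
        obtain ⟨a, b, hab, h1, h2⟩ := lv_return G (fun s => -F (-s)) (fun s => Ψ (-s)) Φ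
          hG (strictMono_negcomp hF) hG0 (by simp [hF0]) hΨn hΦ
          (fun t => -q t) p
          (fun t => (hq t).neg)
          (fun t => by simpa using hp t)
          0 (by show (0:ℝ) < -q 0; linarith) (by show (0:ℝ) ≤ p 0; linarith)
        exact ⟨a, b, hab, h2, neg_inj.mp h1⟩
  obtain ⟨a, b, hab, hpab, hqab⟩ := hret
  -- boundedness of the trajectory
  set E0 : ℝ := Φ (p 0) + Ψ (q 0) with hE0def
  have hEconst : ∀ t, Φ (p t) + Ψ (q t) = E0 := by
    intro t
    have hE : ∀ t, HasDerivAt (fun t => Φ (p t) + Ψ (q t)) 0 t := by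
      intro t
      have h1 : HasDerivAt (fun t => Φ (p t)) (G (p t) * -(F (q t))) t :=
        (hΦ (p t)).comp t (hp t)
      have h2 : HasDerivAt (fun t => Ψ (q t)) (F (q t) * G (p t)) t :=
        (hΨ (q t)).comp t (hq t)
      have := h1.add h2
      exact this.congr_deriv (by ring)
    exact is_const_of_deriv_eq_zero (fun s => (hE s).differentiableAt)
      (fun s => (hE s).deriv) t 0
  have hΦnn : ∀ s, 0 ≤ Φ s := by
    intro s
    have := Real.add_one_le_exp s
    simp only [hΦdef]
    nlinarith
  have hΨnn : ∀ s, 0 ≤ Ψ s := by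
    intro s
    have := Real.add_one_le_exp s
    simp only [hΨdef]
    nlinarith
  have hE0nn : 0 ≤ E0 := by
    rw [hE0def]
    have := hΦnn (p 0); have := hΨnn (q 0); linarith
  have hpbd : ∀ t, |p t| ≤ 1 + E0/δ := by
    intro t
    apply lv_abs_bound _ _ (by positivity)
    have h1 := hEconst t
    have h2 := hΨnn (q t)
    rw [le_div_iff₀ hδ]
    simp only [hΦdef] at h1 ⊢
    nlinarith
  have hqbd : ∀ t, |q t| ≤ 1 + E0/α := by
    intro t
    apply lv_abs_bound _ _ (by positivity)
    have h1 := hEconst t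
    have h2 := hΦnn (p t)
    rw [le_div_iff₀ hα]
    simp only [hΨdef] at h1 ⊢
    nlinarith
  set R : ℝ := max (1 + E0/δ) (1 + E0/α) with hRdef
  -- the planar vector field
  set V : ℝ × ℝ → ℝ × ℝ := fun z => (-(F z.2), G z.1) with hVdef
  set Z : ℝ → ℝ × ℝ := fun t => (p t, q t) with hZdef
  have hZ : ∀ t, HasDerivAt Z (V (Z t)) t := fun t => (hp t).prodMk (hq t)
  have hZb : ∀ t, Z t ∈ Metric.closedBall (0:ℝ×ℝ) R := by
    intro t
    rw [Metric.mem_closedBall, dist_zero_right]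
    rw [Prod.norm_def]
    apply max_le
    · exact le_trans (hpbd t) (le_max_left _ _)
    · exact le_trans (hqbd t) (le_max_right _ _)
  -- Lipschitz bound for V on the ball
  have hKnn : 0 ≤ max α δ * Real.exp R := by positivity
  set K : NNReal := Real.toNNReal (max α δ * Real.exp R) with hKdef
  have hLip : LipschitzOnWith K V (Metric.closedBall 0 R) := by
    apply LipschitzOnWith.of_dist_le_mul
    intro z hz w hw
    rw [Metric.mem_closedBall, dist_zero_right, Prod.norm_def] at hz hw
    have hz1 : |z.1| ≤ R := le_trans (le_max_left _ _) hz
    have hz2 : |z.2| ≤ R := le_trans (le_max_right _ _) hz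
    have hw1 : |w.1| ≤ R := le_trans (le_max_left _ _) hw
    have hw2 : |w.2| ≤ R := le_trans (le_max_right _ _) hw
    have hK' : (K : ℝ) = max α δ * Real.exp R := Real.coe_toNNReal _ hKnn
    rw [Prod.dist_eq, Prod.dist_eq, hK']
    have hd1 : dist z.1 w.1 ≤ max (dist z.1 w.1) (dist z.2 w.2) := le_max_left _ _
    have hd2 : dist z.2 w.2 ≤ max (dist z.1 w.1) (dist z.2 w.2) := le_max_right _ _
    simp only [Real.dist_eq]
    apply max_le
    · -- first component
      simp only [hVdef, hFdef]
      have h := lv_exp_lip R z.2 w.2 hz2 hw2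
      calc |-(α * (Real.exp z.2 - 1)) - -(α * (Real.exp w.2 - 1))|
          = α * |Real.exp z.2 - Real.exp w.2| := by
            rw [show -(α * (Real.exp z.2 - 1)) - -(α * (Real.exp w.2 - 1))
              = α * (Real.exp w.2 - Real.exp z.2) by ring, abs_mul, abs_of_pos hα,
              abs_sub_comm]
        _ ≤ α * (Real.exp R * |z.2 - w.2|) :=
            mul_le_mul_of_nonneg_left h (le_of_lt hα)
        _ = α * Real.exp R * |z.2 - w.2| := by ring
        _ ≤ max α δ * Real.exp R * max |z.1 - w.1| |z.2 - w.2| := by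
            apply mul_le_mul
            · exact mul_le_mul_of_nonneg_right (le_max_left α δ) (Real.exp_pos R).le
            · exact le_max_right _ _
            · exact abs_nonneg _
            · positivity
    · simp only [hVdef, hGdef]
      have h := lv_exp_lip R z.1 w.1 hz1 hw1
      calc |δ * (Real.exp z.1 - 1) - δ * (Real.exp w.1 - 1)|
          = δ * |Real.exp z.1 - Real.exp w.1| := by
            rw [show δ * (Real.exp z.1 - 1) - δ * (Real.exp w.1 - 1)
              = δ * (Real.exp z.1 - Real.exp w.1) by ring, abs_mul, abs_of_pos hδ]
        _ ≤ δ * (Real.exp R * |z.1 - w.1|) :=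
            mul_le_mul_of_nonneg_left h (le_of_lt hδ)
        _ = δ * Real.exp R * |z.1 - w.1| := by ring
        _ ≤ max α δ * Real.exp R * max |z.1 - w.1| |z.2 - w.2| := by
            apply mul_le_mul
            · exact mul_le_mul_of_nonneg_right (le_max_right α δ) (Real.exp_pos R).le
            · exact le_max_left _ _
            · exact abs_nonneg _
            · positivity
  -- periodicity
  set T : ℝ := b - a with hTdef
  have hTa : Z (a + T) = Z a := by
    have hba : a + T = b := by rw [hTdef]; ring
    rw [hba, hZdef]
    simp only
    rw [hpab, hqab]
  have hper := lv_unique V R K hLip Z hZ hZb T a hTa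
  refine ⟨T, by rw [hTdef]; linarith, ?_⟩
  intro t
  have h := hper t
  have hp' : p (t + T) = p t := congrArg Prod.fst h
  have hq' : q (t + T) = q t := congrArg Prod.snd h
  simp only [hpdef] at hp'
  simp only [hqdef] at hq'
  constructor
  · rw [← Real.exp_log (hxpos (t + T)), ← Real.exp_log (hxpos t)]
    congr 1
    linarith
  · rw [← Real.exp_log (hypos (t + T)), ← Real.exp_log (hypos t)]
    congr 1
    linarith
end

section
/- Let α, β, γ, δ > 0 and h > 0. The Jacobian of the Euler map at the fixed point (δ/γ, α/β) is the matrix [[1, −βδh/γ], [αγh/β, 1]], whose eigenvalues over ℂ are the complex conjugates λ = 1 ± i·h·√(αδ), and each eigenvalue has modulus √(1 + αδh²) > 1. Hence the fixed point (δ/γ, α/β) is an unstable focus of the Euler system for every step size h > 0. -/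
open Polynomial

lemma charpoly_root_fin_two (a b c d z : ℂ) :
    (Matrix.charpoly !![a, b; c, d]).IsRoot z ↔ (z - a) * (z - d) - b * c = 0 := by
  rw [Matrix.charpoly, Matrix.det_fin_two]
  simp [Matrix.charmatrix_apply, Polynomial.IsRoot]

/-- The Jacobian of the Euler map at the fixed point `(δ/γ, α/β)` is the matrix
`[[1, −βδh/γ], [αγh/β, 1]]`, whose eigenvalues over `ℂ` are the complex
conjugates `1 ± i·h·√(αδ)`, each of modulus `√(1 + αδh²) > 1`: the coexistence
fixed point is an unstable focus for every step size `h > 0`. -/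
theorem euler_coexistence_unstable_focus
    (α β γ δ h : ℝ) (hα : 0 < α) (hβ : 0 < β) (hγ : 0 < γ) (hδ : 0 < δ)
    (hh : 0 < h) :
    (fderiv ℝ
        (fun p : Fin 2 → ℝ =>
          ![p 0 + h * (α * p 0 - β * p 0 * p 1),
            p 1 + h * (γ * p 0 * p 1 - δ * p 1)])
        ![δ / γ, α / β]).toLinearMap
      = Matrix.toLin' (!![1, -(β * δ * h) / γ; (α * γ * h) / β, 1]) ∧
    (∀ z : ℂ,
      (Matrix.charpoly ((!![1, -(β * δ * h) / γ; (α * γ * h) / β, 1] :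
          Matrix (Fin 2) (Fin 2) ℝ).map (Complex.ofReal))).IsRoot z ↔
        z = 1 + Complex.I * h * Real.sqrt (α * δ) ∨
        z = 1 - Complex.I * h * Real.sqrt (α * δ)) ∧
    ‖(1 + Complex.I * h * Real.sqrt (α * δ) : ℂ)‖ = Real.sqrt (1 + α * δ * h ^ 2) ∧
    ‖(1 - Complex.I * h * Real.sqrt (α * δ) : ℂ)‖ = Real.sqrt (1 + α * δ * h ^ 2) ∧
    1 < Real.sqrt (1 + α * δ * h ^ 2) := by
  have hs : (Real.sqrt (α * δ)) ^ 2 = α * δ :=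
    Real.sq_sqrt (by positivity)
  refine ⟨?_, ?_, ?_, ?_, ?_⟩
  · -- fderiv computation
    set x : Fin 2 → ℝ := ![δ / γ, α / β] with hx
    have h0 : HasFDerivAt (fun p : Fin 2 → ℝ => p 0)
        (ContinuousLinearMap.proj (R := ℝ) (φ := fun _ : Fin 2 => ℝ) 0) x :=
      (ContinuousLinearMap.proj (R := ℝ) (φ := fun _ : Fin 2 => ℝ) 0).hasFDerivAt
    have h1 : HasFDerivAt (fun p : Fin 2 → ℝ => p 1)
        (ContinuousLinearMap.proj (R := ℝ) (φ := fun _ : Fin 2 => ℝ) 1) x :=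
      (ContinuousLinearMap.proj (R := ℝ) (φ := fun _ : Fin 2 => ℝ) 1).hasFDerivAt
    have key : HasFDerivAt
        (fun p : Fin 2 → ℝ =>
            ![p 0 + h * (α * p 0 - β * p 0 * p 1),
              p 1 + h * (γ * p 0 * p 1 - δ * p 1)])
        (LinearMap.toContinuousLinearMap
          (Matrix.toLin' (!![1, -(β * δ * h) / γ; (α * γ * h) / β, 1]))) x := by
      rw [hasFDerivAt_pi']
      intro i
      fin_cases i
      · simp only [Matrix.cons_val_zero]
        have := h0.add ((((h0.const_mul α).sub (((h0.const_mul β).mul h1))).const_mul h))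
        convert this using 1
        · rfl
        ext v
        simp [Matrix.toLin'_apply, Matrix.mulVec, dotProduct, Fin.sum_univ_two, hx]
        field_simp
        ring
      · simp only [Matrix.cons_val_one, Matrix.head_cons]
        have := h1.add ((((h0.const_mul γ).mul h1).sub ((h1.const_mul δ))).const_mul h)
        convert this using 1
        · rfl
        ext v
        simp [Matrix.toLin'_apply, Matrix.mulVec, dotProduct, Fin.sum_univ_two, hx]
        field_simp
        ring
    rw [key.fderiv]
    simp
  · -- eigenvalues
    intro z
    set s : ℝ := Real.sqrt (α * δ) with hs'
    have hb : (β : ℂ) ≠ 0 := by exact_mod_cast hβ.ne'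
    have hg : (γ : ℂ) ≠ 0 := by exact_mod_cast hγ.ne'
    have hss : (s : ℂ) ^ 2 = (α : ℂ) * δ := by exact_mod_cast hs
    have hmap : ((!![1, -(β * δ * h) / γ; (α * γ * h) / β, 1] :
        Matrix (Fin 2) (Fin 2) ℝ).map (Complex.ofReal))
        = !![(1 : ℂ), (-(β * δ * h) / γ : ℝ); ((α * γ * h) / β : ℝ), 1] := by
      ext i j
      fin_cases i <;> fin_cases j <;> simp
    rw [hmap, charpoly_root_fin_two]
    have hdiv : ((-(β * δ * h) / γ : ℝ) : ℂ) * (((α * γ * h) / β : ℝ) : ℂ)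
        = -((α : ℂ) * δ * h ^ 2) := by
      push_cast
      field_simp
    have hfac : (z - 1) * (z - 1) - ((-(β * δ * h) / γ : ℝ) : ℂ) *
        (((α * γ * h) / β : ℝ) : ℂ)
        = (z - (1 + Complex.I * h * s)) * (z - (1 - Complex.I * h * s)) := by
      rw [hdiv]
      linear_combination (-(h : ℂ) ^ 2) * hss + (h : ℂ) ^ 2 * (s : ℂ) ^ 2 * Complex.I_sq
    rw [hfac, mul_eq_zero, sub_eq_zero, sub_eq_zero]
  · rw [Complex.norm_def, Complex.normSq_apply]
    simp [Complex.add_re, Complex.add_im, Complex.mul_re, Complex.mul_im]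
    rw [show (1 : ℝ) + h * Real.sqrt (α * δ) * (h * Real.sqrt (α * δ))
        = 1 + α * δ * h ^ 2 by nlinarith [hs]]
  · rw [Complex.norm_def, Complex.normSq_apply]
    simp [Complex.sub_re, Complex.sub_im, Complex.mul_re, Complex.mul_im]
    rw [show (1 : ℝ) + h * Real.sqrt (α * δ) * (h * Real.sqrt (α * δ))
        = 1 + α * δ * h ^ 2 by nlinarith [hs]]
  · calc (1 : ℝ) = Real.sqrt 1 := Real.sqrt_one.symm
      _ < Real.sqrt (1 + α * δ * h ^ 2) :=
        Real.sqrt_lt_sqrt (by norm_num) (by nlinarith [mul_pos (mul_pos hα hδ) (pow_pos hh 2)])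
end

section
/- Let α, β, γ, δ > 0 and φ > 0. A point (x, y) ∈ ℝ² with x ≥ 0 and y ≥ 0 is a fixed point of the Mickens map if and only if (x, y) = (0, 0) or (x, y) = (δ/γ, α/β); i.e., the Mickens discretization has exactly the same fixed points as the continuous Lotka–Volterra system. -/
/-- The fixed points of the Mickens discretization in the first quadrant are
exactly the equilibria of the continuous Lotka–Volterra system:
`(0, 0)` and `(δ/γ, α/β)`. -/
theorem mickens_fixed_points
    (α β γ δ φ : ℝ) (hα : 0 < α) (hβ : 0 < β) (hγ : 0 < γ) (hδ : 0 < δ)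
    (hφ : 0 < φ) (x y : ℝ) (hx : 0 ≤ x) (hy : 0 ≤ y) :
    (x * (2 * α * φ + 1) / (1 + α * φ + β * φ * y),
      (2 * γ * φ * x * y * (2 * α * φ + 1) + y * (1 + α * φ + β * φ * y)) /
        ((1 + δ * φ) * (1 + α * φ + β * φ * y) + γ * φ * x * (2 * α * φ + 1)))
      = (x, y) ↔
      ((x, y) = ((0 : ℝ), (0 : ℝ)) ∨ (x, y) = (δ / γ, α / β)) := by
  have hD : (0:ℝ) < 1 + α * φ + β * φ * y := by positivity
  have hE : (0:ℝ) < (1 + δ * φ) * (1 + α * φ + β * φ * y)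
      + γ * φ * x * (2 * α * φ + 1) := by positivity
  simp only [Prod.mk.injEq]
  constructor
  · rintro ⟨h1, h2⟩
    rw [div_eq_iff hD.ne'] at h1
    rw [div_eq_iff hE.ne'] at h2
    have key1 : x * (α - β * y) * φ = 0 := by linear_combination h1
    have key1' : x * (α - β * y) = 0 :=
      (mul_eq_zero.1 key1).resolve_right hφ.ne'
    have key2 : y * (γ * x * (2 * α * φ + 1)
        - δ * (1 + α * φ + β * φ * y)) * φ = 0 := by linear_combination h2
    have key2' : y * (γ * x * (2 * α * φ + 1)
        - δ * (1 + α * φ + β * φ * y)) = 0 :=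
      (mul_eq_zero.1 key2).resolve_right hφ.ne'
    rcases mul_eq_zero.1 key1' with hx0 | hy0
    · left
      subst hx0
      rcases mul_eq_zero.1 key2' with hy0 | habs
      · exact ⟨rfl, hy0⟩
      · exfalso; nlinarith
    · right
      have hyv : y = α / β := by field_simp; linarith
      rcases mul_eq_zero.1 key2' with hy0 | hxx
      · exfalso; nlinarith
      · constructor
        · have hβy : β * y = α := by linarith
          have h2αφ : (0:ℝ) < 2 * α * φ + 1 := by positivity
          field_simp
          nlinarith [hxx, hβy]
        · exact hyv
  · rintro (⟨hx0, hy0⟩ | ⟨hx0, hy0⟩) <;> subst hx0 <;> subst hy0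
    · norm_num
    · constructor
      · rw [div_eq_iff hD.ne']
        field_simp
        ring
      · rw [div_eq_iff hE.ne']
        field_simp
        ring
end

section
/- Let α, β, γ, δ > 0 and φ > 0. The Jacobian of the Mickens map at the fixed point (0,0) is the diagonal matrix diag((2αφ + 1)/(αφ + 1), 1/(δφ + 1)), whose eigenvalues are λ₁ = 1/(δφ + 1) and λ₂ = (2αφ + 1)/(αφ + 1), and they satisfy 0 < λ₁ < 1 and λ₂ > 1. Hence (0,0) is a saddle point of the Mickens discretization, for every φ > 0. -/
/-- The Jacobian of the Mickens map at the fixed point `(0,0)` is the diagonal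
matrix `diag((2αφ+1)/(αφ+1), 1/(δφ+1))`; its eigenvalues satisfy
`0 < λ₁ = 1/(δφ+1) < 1` and `λ₂ = (2αφ+1)/(αφ+1) > 1`, so `(0,0)` is a saddle
point of the Mickens discretization for every `φ > 0`. -/
theorem mickens_origin_saddle
    (α β γ δ φ : ℝ) (hα : 0 < α) (hβ : 0 < β) (hγ : 0 < γ) (hδ : 0 < δ)
    (hφ : 0 < φ) :
    (fderiv ℝ
        (fun p : Fin 2 → ℝ =>
          ![p 0 * (2 * α * φ + 1) / (1 + α * φ + β * φ * p 1),
            (2 * γ * φ * p 0 * p 1 * (2 * α * φ + 1) +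
                p 1 * (1 + α * φ + β * φ * p 1)) /
              ((1 + δ * φ) * (1 + α * φ + β * φ * p 1) +
                γ * φ * p 0 * (2 * α * φ + 1))])
        ![0, 0]).toLinearMap
      = Matrix.toLin'
          (Matrix.diagonal ![(2 * α * φ + 1) / (α * φ + 1), 1 / (δ * φ + 1)]) ∧
    0 < 1 / (δ * φ + 1) ∧ 1 / (δ * φ + 1) < 1 ∧
    1 < (2 * α * φ + 1) / (α * φ + 1) := by
  have hαφ : (0:ℝ) < α * φ := mul_pos hα hφ
  have hδφ : (0:ℝ) < δ * φ := mul_pos hδ hφ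
  set M : Matrix (Fin 2) (Fin 2) ℝ :=
    Matrix.diagonal ![(2 * α * φ + 1) / (α * φ + 1), 1 / (δ * φ + 1)] with hM
  set L : (Fin 2 → ℝ) →L[ℝ] (Fin 2 → ℝ) :=
    LinearMap.toContinuousLinearMap (Matrix.toLin' M) with hL
  have h0 : HasFDerivAt (fun p : Fin 2 → ℝ => p 0)
      (ContinuousLinearMap.proj 0 : (Fin 2 → ℝ) →L[ℝ] ℝ) (![0,0] : Fin 2 → ℝ) :=
    hasFDerivAt_apply 0 ![0,0]
  have h1 : HasFDerivAt (fun p : Fin 2 → ℝ => p 1)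
      (ContinuousLinearMap.proj 1 : (Fin 2 → ℝ) →L[ℝ] ℝ) (![0,0] : Fin 2 → ℝ) :=
    hasFDerivAt_apply 1 ![0,0]
  have key : HasFDerivAt
      (fun p : Fin 2 → ℝ =>
          ![p 0 * (2 * α * φ + 1) / (1 + α * φ + β * φ * p 1),
            (2 * γ * φ * p 0 * p 1 * (2 * α * φ + 1) +
                p 1 * (1 + α * φ + β * φ * p 1)) /
              ((1 + δ * φ) * (1 + α * φ + β * φ * p 1) +
                γ * φ * p 0 * (2 * α * φ + 1))]) L ![0, 0] := by
    rw [hasFDerivAt_pi']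
    intro i
    have hd : HasFDerivAt (fun p : Fin 2 → ℝ => 1 + α * φ + β * φ * p 1)
        ((β * φ) • (ContinuousLinearMap.proj 1 :
          (Fin 2 → ℝ) →L[ℝ] ℝ)) ![0,0] := by
      have := (hasFDerivAt_const (1 + α * φ) (![0,0] : Fin 2 → ℝ)).add
        (h1.const_mul (β * φ))
      simp only [zero_add] at this; exact this
    fin_cases i
    · simp only [Fin.zero_eta, Matrix.cons_val_zero, div_eq_mul_inv]
      have hn : HasFDerivAt (fun p : Fin 2 → ℝ => p 0 * (2 * α * φ + 1))
          ((2 * α * φ + 1) • (ContinuousLinearMap.proj 0 :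
            (Fin 2 → ℝ) →L[ℝ] ℝ)) ![0,0] := h0.mul_const _
      have hne : (1 + α * φ + β * φ * (![0,0] : Fin 2 → ℝ) 1) ≠ 0 := by
        have h : (1 + α * φ + β * φ * (![0,0] : Fin 2 → ℝ) 1) = 1 + α * φ := by
          norm_num
        rw [h]; positivity
      have hinv := (hasFDerivAt_inv hne).comp (![0,0] : Fin 2 → ℝ) hd
      have h := hn.mul hinv
      refine h.congr_fderiv ?_
      ext v
      simp [Matrix.toLin'_apply, Matrix.mulVec_diagonal, L, M,
        ContinuousLinearMap.proj, div_eq_mul_inv]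
      field_simp
      try ring
      try tauto
    · simp only [Fin.mk_one, Matrix.cons_val_one, Matrix.head_cons, div_eq_mul_inv]
      have hn := ((((h0.const_mul (2 * γ * φ)).mul h1).mul_const (2 * α * φ + 1)).add
          (h1.mul hd))
      have hdd := (hd.const_mul (1 + δ * φ)).add
          ((h0.const_mul (γ * φ)).mul_const (2 * α * φ + 1))
      have hne : ((1 + δ * φ) * (1 + α * φ + β * φ * (![0,0] : Fin 2 → ℝ) 1) +
          γ * φ * (![0,0] : Fin 2 → ℝ) 0 * (2 * α * φ + 1)) ≠ 0 := by
        have h : ((1 + δ * φ) * (1 + α * φ + β * φ * (![0,0] : Fin 2 → ℝ) 1) +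
            γ * φ * (![0,0] : Fin 2 → ℝ) 0 * (2 * α * φ + 1))
            = (1 + δ * φ) * (1 + α * φ) := by norm_num
        rw [h]; positivity
      have hinv := (hasFDerivAt_inv hne).comp (![0,0] : Fin 2 → ℝ) hdd
      have h := hn.mul hinv
      refine h.congr_fderiv ?_
      ext v
      simp [Matrix.toLin'_apply, Matrix.mulVec_diagonal, L, M,
        ContinuousLinearMap.proj, div_eq_mul_inv]
      field_simp
      ring
  refine ⟨?_, ?_, ?_, ?_⟩
  · rw [key.fderiv, hL, LinearMap.coe_toContinuousLinearMap]
  · positivity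
  · rw [div_lt_one (by positivity)]; linarith
  · rw [lt_div_iff₀ (by positivity)]; linarith
end

section
/- Let α, β, γ, δ > 0 and φ > 0, and let M be the 2×2 real matrix [[1, −βδφ/((2αφ + 1)γ)], [αγφ/(β(2δφ + 1)), (3αδφ² + 2(α + δ)φ + 1)/(4αδφ² + 2(α + δ)φ + 1)]] (the Jacobian of the Mickens map at the fixed point (δ/γ, α/β)). Then det M = 1 and (trace M)² < 4, so the eigenvalues of M over ℂ are non-real complex conjugates, each of modulus exactly 1. Hence (δ/γ, α/β) is a center of the linearized Mickens system. -/
open Polynomial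

lemma charpoly_fin_two_aux (A : Matrix (Fin 2) (Fin 2) ℂ) :
    A.charpoly = X ^ 2 - C A.trace * X + C A.det := by
  simp [Matrix.charpoly, Matrix.det_fin_two, Matrix.charmatrix_apply, Matrix.diagonal,
    Matrix.trace_fin_two]
  ring

/-- The Jacobian of the Mickens map at the coexistence fixed point `(δ/γ, α/β)`
has determinant `1` and squared trace less than `4`; hence its eigenvalues over
`ℂ` are non-real complex conjugates of modulus exactly `1`, and `(δ/γ, α/β)` is
a center of the linearized Mickens system. -/
theorem mickens_coexistence_center
    (α β γ δ φ : ℝ) (hα : 0 < α) (hβ : 0 < β) (hγ : 0 < γ) (hδ : 0 < δ)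
    (hφ : 0 < φ) :
    let M : Matrix (Fin 2) (Fin 2) ℝ :=
      !![1, -(β * δ * φ) / ((2 * α * φ + 1) * γ);
         α * γ * φ / (β * (2 * δ * φ + 1)),
         (3 * α * δ * φ ^ 2 + 2 * (α + δ) * φ + 1) /
           (4 * α * δ * φ ^ 2 + 2 * (α + δ) * φ + 1)]
    M.det = 1 ∧ (M.trace) ^ 2 < 4 ∧
      ∀ z : ℂ, (Matrix.charpoly (M.map (Complex.ofReal))).IsRoot z →
        z.im ≠ 0 ∧ ‖z‖ = 1 := by
  intro M
  have hD : (0:ℝ) < 4 * α * δ * φ ^ 2 + 2 * (α + δ) * φ + 1 := by positivity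
  have h1 : (2 * α * φ + 1) * γ ≠ 0 := by positivity
  have h2 : β * (2 * δ * φ + 1) ≠ 0 := by positivity
  have hdet : M.det = 1 := by
    show (!![1, -(β * δ * φ) / ((2 * α * φ + 1) * γ);
         α * γ * φ / (β * (2 * δ * φ + 1)),
         (3 * α * δ * φ ^ 2 + 2 * (α + δ) * φ + 1) /
           (4 * α * δ * φ ^ 2 + 2 * (α + δ) * φ + 1)] : Matrix (Fin 2) (Fin 2) ℝ).det = 1
    rw [Matrix.det_fin_two_of]
    field_simp
    ring
  have htr : M.trace = 2 - (α * δ * φ ^ 2) / (4 * α * δ * φ ^ 2 + 2 * (α + δ) * φ + 1) := by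
    show (!![1, -(β * δ * φ) / ((2 * α * φ + 1) * γ);
         α * γ * φ / (β * (2 * δ * φ + 1)),
         (3 * α * δ * φ ^ 2 + 2 * (α + δ) * φ + 1) /
           (4 * α * δ * φ ^ 2 + 2 * (α + δ) * φ + 1)] : Matrix (Fin 2) (Fin 2) ℝ).trace = _
    rw [Matrix.trace_fin_two_of]
    field_simp
    ring
  have hq0 : 0 < (α * δ * φ ^ 2) / (4 * α * δ * φ ^ 2 + 2 * (α + δ) * φ + 1) := by positivity
  have hq1 : (α * δ * φ ^ 2) / (4 * α * δ * φ ^ 2 + 2 * (α + δ) * φ + 1) < 1 := by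
    rw [div_lt_one hD]; nlinarith
  have htrsq : M.trace ^ 2 < 4 := by rw [htr]; nlinarith
  refine ⟨hdet, htrsq, ?_⟩
  intro z hz
  set t : ℝ := M.trace with ht
  have hmt : (M.map Complex.ofReal).trace = (t : ℂ) := by
    simp [Matrix.trace, Matrix.diag, Matrix.map_apply, ht]
  have hmd : (M.map Complex.ofReal).det = 1 := by
    rw [show M.map Complex.ofReal = M.map Complex.ofRealHom from rfl,
      ← RingHom.mapMatrix_apply, ← RingHom.map_det, hdet]; simp
  rw [charpoly_fin_two_aux, hmt, hmd] at hz
  have heq : z ^ 2 - (t : ℂ) * z + 1 = 0 := by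
    simpa [Polynomial.IsRoot] using hz
  have hre : z.re ^ 2 - z.im ^ 2 - t * z.re + 1 = 0 := by
    have := congrArg Complex.re heq
    simp [pow_two, Complex.mul_re, Complex.mul_im] at this
    nlinarith [this]
  have him : 2 * z.re * z.im - t * z.im = 0 := by
    have := congrArg Complex.im heq
    simp [pow_two, Complex.mul_re, Complex.mul_im] at this
    nlinarith [this]
  have hb : z.im ≠ 0 := by
    intro h0
    rw [h0] at hre
    nlinarith [htrsq, hre, sq_nonneg (2 * z.re - t)]
  refine ⟨hb, ?_⟩
  have ha : z.re = t / 2 := by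
    have hfac : z.im * (2 * z.re - t) = 0 := by ring_nf; linarith [him]
    rcases mul_eq_zero.mp hfac with h | h
    · exact absurd h hb
    · linarith
  rw [Complex.norm_def, Real.sqrt_eq_one, Complex.normSq_apply]
  nlinarith [hre, ha]
end

section
/- Let α, β, γ, δ > 0 and φ > 0, and consider the Mickens update x_{i+1} = x_i(2αφ + 1)/(1 + αφ + βφy_i) with x_i > 0 and y_i ≥ 0. If y_i > α/β then x_{i+1} < x_i, and if y_i < α/β then x_{i+1} > x_i. Moreover, for y_{i+1} = y_i(2γφx_{i+1} + 1)/(1 + γφx_{i+1} + δφ) with y_i > 0 and x_{i+1} ≥ 0: if x_{i+1} < δ/γ then y_{i+1} < y_i, and if x_{i+1} > δ/γ then y_{i+1} > y_i. (Hence the Mickens trajectories turn counterclockwise around (δ/γ, α/β), exactly as in the continuous system.) -/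
/-- Monotonicity of the Mickens trajectories: with `x_i > 0` the prey density
decreases when `y_i > α/β` and increases when `y_i < α/β`; with `y_i > 0` the
predator density decreases when `x_{i+1} < δ/γ` and increases when
`x_{i+1} > δ/γ`. Hence Mickens trajectories turn counterclockwise around
`(δ/γ, α/β)`, exactly as in the continuous system. -/
theorem mickens_trajectory_directions
    (α β γ δ φ : ℝ) (hα : 0 < α) (hβ : 0 < β) (hγ : 0 < γ) (hδ : 0 < δ)
    (hφ : 0 < φ) :
    (∀ xi yi : ℝ, 0 < xi → 0 ≤ yi →
      ((α / β < yi →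
          xi * (2 * α * φ + 1) / (1 + α * φ + β * φ * yi) < xi) ∧
       (yi < α / β →
          xi < xi * (2 * α * φ + 1) / (1 + α * φ + β * φ * yi)))) ∧
    (∀ xi1 yi : ℝ, 0 < yi → 0 ≤ xi1 →
      ((xi1 < δ / γ →
          yi * (2 * γ * φ * xi1 + 1) / (1 + γ * φ * xi1 + δ * φ) < yi) ∧
       (δ / γ < xi1 →
          yi < yi * (2 * γ * φ * xi1 + 1) / (1 + γ * φ * xi1 + δ * φ)))) := by
  constructor
  · intro xi yi hx hy
    have hD : 0 < 1 + α * φ + β * φ * yi := by positivity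
    constructor
    · intro h
      rw [div_lt_iff₀ hD]
      have : α < β * yi := (div_lt_iff₀ hβ).mp h |>.trans_eq (mul_comm _ _)
      nlinarith [mul_lt_mul_of_pos_left this (mul_pos hx hφ)]
    · intro h
      rw [lt_div_iff₀ hD]
      have : β * yi < α := by
        have := (lt_div_iff₀ hβ).mp h
        linarith [mul_comm yi β]
      nlinarith [mul_lt_mul_of_pos_left this (mul_pos hx hφ)]
  · intro xi1 yi hy hx
    have hD : 0 < 1 + γ * φ * xi1 + δ * φ := by positivity
    constructor
    · intro h
      rw [div_lt_iff₀ hD]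
      have : γ * xi1 < δ := by
        have := (lt_div_iff₀ hγ).mp h
        linarith [mul_comm xi1 γ]
      nlinarith [mul_lt_mul_of_pos_left this (mul_pos hy hφ)]
    · intro h
      rw [lt_div_iff₀ hD]
      have : δ < γ * xi1 := by
        have := (div_lt_iff₀ hγ).mp h
        linarith [mul_comm xi1 γ]
      nlinarith [mul_lt_mul_of_pos_left this (mul_pos hy hφ)]
end
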